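/- Fix ζ₀ on the unit circle, an integer ℓ ≥ 0, and a polynomial a with a zero of order exactly m ≥ ℓ + 1 at ζ₀ and no other zeros in the closed unit disk other than points of the unit circle. Let k_{tζ₀,ℓ}(z) = c_ℓ z^ℓ / (1 − t·conj(ζ₀)·z)^{ℓ+1} (the H² reproducing kernel for the ℓ-th derivative at tζ₀, t ∈ [0,1)). Then a·k_{tζ₀,ℓ} converges in H²-norm as t → 1⁻ to the function c · z^ℓ (z − ζ₀)^{m − (ℓ+1)} · a(z)/(z − ζ₀)^m for some nonzero constant c. -/

import Mathlib

open Polynomial Filter Complex intervalIntegral MeasureTheory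

theorem stmt_13 (ζ₀ : ℂ) (hζ₀ : ‖ζ₀‖ = 1) (ℓ m : ℕ) (hm : ℓ + 1 ≤ m)
    (a h : Polynomial ℂ)
    (hfac : a = (X - C ζ₀) ^ m * h) (hh : h.eval ζ₀ ≠ 0)
    (hzeros : ∀ z : ℂ, ‖z‖ ≤ 1 → a.eval z = 0 → ‖z‖ = 1)
    (k : ℝ → ℂ → ℂ)
    (hk : ∀ t : ℝ, ∀ z : ℂ, k t z =
      (ℓ.factorial : ℂ) * z ^ ℓ / (1 - (t : ℂ) * (starRingEnd ℂ) ζ₀ * z) ^ (ℓ + 1)) :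
    ∃ c : ℂ, c ≠ 0 ∧
      Tendsto (fun t : ℝ =>
          ∫ θ in (0 : ℝ)..(2 * Real.pi),
            ‖a.eval (Complex.exp (θ * Complex.I)) * k t (Complex.exp (θ * Complex.I)) -
              c * (Complex.exp (θ * Complex.I)) ^ ℓ *
                (Complex.exp (θ * Complex.I) - ζ₀) ^ (m - (ℓ + 1)) *
                h.eval (Complex.exp (θ * Complex.I))‖ ^ 2)
        (nhdsWithin 1 (Set.Iio 1)) (nhds 0) := by
  obtain ⟨n, rfl⟩ : ∃ n, m = n + (ℓ + 1) := ⟨m - (ℓ + 1), by omega⟩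
  clear hm
  have hζ0 : ζ₀ ≠ 0 := fun hz => by simp [hz] at hζ₀
  set w : ℂ := (starRingEnd ℂ) ζ₀ with hw
  have hnsq : Complex.normSq ζ₀ = 1 := by
    rw [Complex.normSq_eq_norm_sq, hζ₀]; norm_num
  have hwζ : ζ₀ * w = 1 := by rw [hw, Complex.mul_conj, hnsq]; norm_num
  have hwnorm : ‖w‖ = 1 := by
    rw [hw]
    simpa using hζ₀
  -- norm of exp on circle
  have hnz : ∀ θ : ℝ, ‖Complex.exp (θ * Complex.I)‖ = 1 := fun θ => by
    exact Complex.norm_exp_ofReal_mul_I θ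
  -- basic identity
  have hidB : ∀ z : ℂ, z - ζ₀ = -ζ₀ * (1 - w * z) := fun z => by
    linear_combination (-z) * hwζ
  -- denominator nonzero
  have hden : ∀ t : ℝ, t ∈ Set.Ico (0:ℝ) 1 → ∀ z : ℂ, ‖z‖ = 1 →
      (1 : ℂ) - (t:ℂ) * w * z ≠ 0 := by
    intro t ht z hz h0
    rw [sub_eq_zero] at h0
    have h1 : ‖(t:ℂ) * w * z‖ = t := by
      rw [norm_mul, norm_mul, hwnorm, hz, Complex.norm_real, Real.norm_of_nonneg ht.1]; ring
    rw [← h0] at h1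
    simp at h1
    linarith [ht.2]
  -- key inequality
  have keyA : ∀ t : ℝ, t ∈ Set.Ico (0:ℝ) 1 → ∀ z : ℂ, ‖z‖ = 1 →
      ‖z - ζ₀‖ ≤ 2 * ‖1 - (t:ℂ) * w * z‖ := by
    intro t ht z hz
    have e : z - ζ₀ = -ζ₀ * ((1 - (t:ℂ)*w*z) - ((1-t : ℝ):ℂ) * (w*z)) := by
      push_cast
      linear_combination (-z) * hwζ
    have hb : (1:ℝ) - t ≤ ‖1 - (t:ℂ)*w*z‖ := by
      have h2 := norm_sub_norm_le (1 : ℂ) ((t:ℂ)*w*z)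
      have h3 : ‖(t:ℂ)*w*z‖ = t := by
        rw [norm_mul, norm_mul, hwnorm, hz, Complex.norm_real, Real.norm_of_nonneg ht.1]; ring
      rw [h3, norm_one] at h2; exact h2
    calc ‖z - ζ₀‖ = ‖(1 - (t:ℂ)*w*z) - ((1-t : ℝ):ℂ) * (w*z)‖ := by
          rw [e, norm_mul, norm_neg, hζ₀, one_mul]
      _ ≤ ‖1 - (t:ℂ)*w*z‖ + ‖((1-t : ℝ):ℂ) * (w*z)‖ := norm_sub_le _ _
      _ = ‖1 - (t:ℂ)*w*z‖ + (1 - t) := by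
          rw [norm_mul, norm_mul, hwnorm, hz, Complex.norm_real,
            Real.norm_of_nonneg (by linarith [ht.2] : (0:ℝ) ≤ 1 - t)]; ring
      _ ≤ ‖1 - (t:ℂ)*w*z‖ + ‖1 - (t:ℂ)*w*z‖ := by linarith
      _ = 2 * ‖1 - (t:ℂ)*w*z‖ := by ring
  -- bound on h on the circle
  set M : ℝ := ∑ i ∈ Finset.range (h.natDegree + 1), ‖h.coeff i‖ with hM
  have hMb : ∀ z : ℂ, ‖z‖ = 1 → ‖h.eval z‖ ≤ M := by
    intro z hz
    rw [Polynomial.eval_eq_sum_range]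
    refine (norm_sum_le _ _).trans ?_
    refine Finset.sum_le_sum fun i _ => ?_
    rw [norm_mul, norm_pow, hz, one_pow, mul_one]
  have hM0 : 0 ≤ M := Finset.sum_nonneg fun i _ => norm_nonneg _
  -- the constant
  set c : ℂ := (ℓ.factorial : ℂ) * (-ζ₀) ^ (ℓ + 1) with hc
  have hcne : c ≠ 0 :=
    mul_ne_zero (Nat.cast_ne_zero.2 ℓ.factorial_ne_zero)
      (pow_ne_zero _ (neg_ne_zero.2 hζ0))
  -- evaluation of a
  have haev : ∀ z : ℂ, a.eval z = (z - ζ₀) ^ (n + (ℓ + 1)) * h.eval z := by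
    intro z; simp [hfac]
  -- main algebraic identity
  have Did : ∀ (t : ℝ) (z : ℂ),
      a.eval z * ((ℓ.factorial : ℂ) * z ^ ℓ / (1 - (t:ℂ) * w * z) ^ (ℓ + 1)) -
        c * z ^ ℓ * (z - ζ₀) ^ n * h.eval z =
      (ℓ.factorial : ℂ) * z ^ ℓ * h.eval z * (z - ζ₀) ^ n *
        ((z - ζ₀) ^ (ℓ + 1) / (1 - (t:ℂ) * w * z) ^ (ℓ + 1) - (-ζ₀) ^ (ℓ + 1)) := by
    intro t z
    rw [haev, hc, pow_add]
    ring
  set B : ℝ := (ℓ.factorial : ℝ) * (M * (2 ^ n * (2 ^ (ℓ + 1) + 1))) with hB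
  have keyB : ∀ t : ℝ, t ∈ Set.Ico (0:ℝ) 1 → ∀ z : ℂ, ‖z‖ = 1 →
      ‖a.eval z * ((ℓ.factorial : ℂ) * z ^ ℓ / (1 - (t:ℂ) * w * z) ^ (ℓ + 1)) -
        c * z ^ ℓ * (z - ζ₀) ^ n * h.eval z‖ ≤ B := by
    intro t ht z hz
    rw [Did]
    have hd := hden t ht z hz
    have hzma : ‖z - ζ₀‖ ≤ 2 := by
      calc ‖z - ζ₀‖ ≤ ‖z‖ + ‖ζ₀‖ := norm_sub_le _ _
        _ = 2 := by rw [hz, hζ₀]; norm_num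
    have hbr : ‖(z - ζ₀) ^ (ℓ+1) / (1 - (t:ℂ)*w*z) ^ (ℓ+1) - (-ζ₀) ^ (ℓ+1)‖
        ≤ 2 ^ (ℓ+1) + 1 := by
      refine (norm_sub_le _ _).trans ?_
      have hq : ‖(z - ζ₀) ^ (ℓ+1) / (1 - (t:ℂ)*w*z) ^ (ℓ+1)‖ ≤ 2 ^ (ℓ+1) := by
        rw [← div_pow, norm_pow]
        refine pow_le_pow_left₀ (norm_nonneg _) ?_ _
        rw [norm_div, div_le_iff₀ (norm_pos_iff.mpr hd)]
        exact keyA t ht z hz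
      have h2 : ‖(-ζ₀) ^ (ℓ+1)‖ = 1 := by rw [norm_pow, norm_neg, hζ₀, one_pow]
      rw [h2]; linarith
    calc ‖(ℓ.factorial : ℂ) * z ^ ℓ * h.eval z * (z - ζ₀) ^ n *
          ((z - ζ₀) ^ (ℓ + 1) / (1 - (t:ℂ) * w * z) ^ (ℓ + 1) - (-ζ₀) ^ (ℓ + 1))‖
        = (ℓ.factorial : ℝ) * (‖h.eval z‖ * (‖z - ζ₀‖ ^ n *
            ‖(z - ζ₀) ^ (ℓ + 1) / (1 - (t:ℂ) * w * z) ^ (ℓ + 1) - (-ζ₀) ^ (ℓ + 1)‖)) := by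
          simp only [norm_mul, norm_pow, hz, one_pow, Complex.norm_natCast]
          ring
      _ ≤ (ℓ.factorial : ℝ) * (M * (2 ^ n * (2 ^ (ℓ + 1) + 1))) := by
          refine mul_le_mul_of_nonneg_left ?_ (Nat.cast_nonneg _)
          refine mul_le_mul (hMb z hz) ?_ (by positivity) hM0
          exact mul_le_mul (pow_le_pow_left₀ (norm_nonneg _) hzma n) hbr
            (norm_nonneg _) (by positivity)
      _ = B := hB.symm
  refine ⟨c, hcne, ?_⟩
  simp only [hk, Nat.add_sub_cancel]
  simp only [intervalIntegral.integral_of_le Real.two_pi_pos.le]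
  have hzero : (0:ℝ) = ∫ θ in Set.Ioc (0:ℝ) (2 * Real.pi), (0:ℝ) := by simp
  rw [show nhds (0:ℝ) = nhds (∫ θ in Set.Ioc (0:ℝ) (2 * Real.pi), (0:ℝ)) by rw [← hzero]]
  apply MeasureTheory.tendsto_integral_filter_of_dominated_convergence (bound := fun _ => B ^ 2)
  · -- measurability
    filter_upwards [Ioo_mem_nhdsLT (show (0:ℝ) < 1 by norm_num)] with t ht
    simp only [Did]
    apply Continuous.aestronglyMeasurable
    have hce : Continuous fun θ : ℝ => Complex.exp (↑θ * Complex.I) :=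
      Complex.continuous_exp.comp (Complex.continuous_ofReal.mul continuous_const)
    refine (Continuous.norm ?_).pow 2
    refine Continuous.mul ?_ ?_
    · exact ((continuous_const.mul (hce.pow ℓ)).mul (h.continuous.comp hce)).mul
        ((hce.sub continuous_const).pow n)
    · refine Continuous.sub (Continuous.div ((hce.sub continuous_const).pow (ℓ+1))
        ((continuous_const.sub (continuous_const.mul hce)).pow (ℓ+1)) ?_) continuous_const
      intro θ
      exact pow_ne_zero _ (hden t ⟨ht.1.le, ht.2⟩ _ (hnz θ))
  · -- bound
    filter_upwards [Ioo_mem_nhdsLT (show (0:ℝ) < 1 by norm_num)] with t ht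
    refine Eventually.of_forall fun θ => ?_
    rw [Real.norm_of_nonneg (by positivity)]
    exact pow_le_pow_left₀ (norm_nonneg _) (keyB t ⟨ht.1.le, ht.2⟩ _ (hnz θ)) 2
  · -- integrable bound
    exact (integrableOn_const measure_Ioc_lt_top.ne)
  · -- a.e. pointwise limit
    refine MeasureTheory.ae_restrict_of_ae ?_
    have hS : Set.Countable {θ : ℝ | Complex.exp (↑θ * Complex.I) = ζ₀} := by
      rcases Set.eq_empty_or_nonempty {θ : ℝ | Complex.exp (↑θ * Complex.I) = ζ₀} with hE | ⟨θ₀, hθ₀⟩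
      · rw [hE]; exact Set.countable_empty
      · refine Set.Countable.mono ?_ (Set.countable_range fun kk : ℤ => θ₀ + 2 * Real.pi * kk)
        intro θ hθ
        simp only [Set.mem_setOf_eq] at hθ hθ₀
        have he : Complex.exp (↑θ * Complex.I) = Complex.exp (↑θ₀ * Complex.I) := by
          rw [hθ, hθ₀]
        rw [Complex.exp_eq_exp_iff_exists_int] at he
        obtain ⟨kk, hk'⟩ := he
        refine ⟨kk, ?_⟩
        have h2 : (θ:ℂ) * Complex.I = ((θ₀:ℂ) + kk * (2 * Real.pi)) * Complex.I := by
          push_cast at hk' ⊢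
          linear_combination hk'
        have h3 : (θ:ℂ) = (θ₀:ℂ) + kk * (2 * Real.pi) := mul_right_cancel₀ Complex.I_ne_zero h2
        have h4 : θ = θ₀ + kk * (2 * Real.pi) := by exact_mod_cast h3
        rw [h4]; ring
    have hae : ∀ᵐ θ : ℝ, Complex.exp (↑θ * Complex.I) ≠ ζ₀ := by
      have h0 := Set.Countable.measure_zero hS MeasureTheory.volume
      rw [MeasureTheory.ae_iff]
      have hset : {θ : ℝ | ¬ Complex.exp (↑θ * Complex.I) ≠ ζ₀}
          = {θ : ℝ | Complex.exp (↑θ * Complex.I) = ζ₀} := by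
        ext θ; simp
      rw [hset]
      exact h0
    filter_upwards [hae] with θ hθ
    simp only [Did]
    set z := Complex.exp (↑θ * Complex.I) with hzdef
    have hwz : (1:ℂ) - w * z ≠ 0 := by
      intro h0
      apply hθ
      have h1 : w * z = 1 := (sub_eq_zero.mp h0).symm
      calc z = ζ₀ * w * z := by rw [hwζ, one_mul]
        _ = ζ₀ * (w * z) := by ring
        _ = ζ₀ := by rw [h1, mul_one]
    have hT : Tendsto (fun t : ℝ => ((t:ℂ))) (nhdsWithin (1:ℝ) (Set.Iio 1)) (nhds (1:ℂ)) := by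
      have h1 : Tendsto (fun t : ℝ => ((t:ℂ))) (nhds (1:ℝ)) (nhds (1:ℂ)) := by
        simpa using Complex.continuous_ofReal.tendsto 1
      exact h1.mono_left nhdsWithin_le_nhds
    have hT2 : Tendsto (fun t : ℝ => (1:ℂ) - (t:ℂ) * w * z) (nhdsWithin (1:ℝ) (Set.Iio 1))
        (nhds ((1:ℂ) - w * z)) := by
      have h1 : Tendsto (fun t : ℝ => (t:ℂ) * w * z) (nhdsWithin (1:ℝ) (Set.Iio 1))
          (nhds ((1:ℂ) * w * z)) := (hT.mul tendsto_const_nhds).mul tendsto_const_nhds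
      have h2 : Tendsto (fun t : ℝ => (1:ℂ) - (t:ℂ) * w * z) (nhdsWithin (1:ℝ) (Set.Iio 1))
          (nhds ((1:ℂ) - (1:ℂ) * w * z)) := tendsto_const_nhds.sub h1
      simpa using h2
    have hq0 : (z - ζ₀) ^ (ℓ+1) / (1 - w * z) ^ (ℓ+1) - (-ζ₀) ^ (ℓ+1) = 0 := by
      rw [sub_eq_zero, div_eq_iff (pow_ne_zero _ hwz), hidB, mul_pow]
    have hfin : Tendsto (fun t : ℝ =>
        ‖(ℓ.factorial : ℂ) * z ^ ℓ * eval z h * (z - ζ₀) ^ n *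
          ((z - ζ₀) ^ (ℓ+1) / (1 - (t:ℂ) * w * z) ^ (ℓ+1) - (-ζ₀) ^ (ℓ+1))‖ ^ 2)
        (nhdsWithin (1:ℝ) (Set.Iio 1))
        (nhds (‖(ℓ.factorial : ℂ) * z ^ ℓ * eval z h * (z - ζ₀) ^ n *
          ((z - ζ₀) ^ (ℓ+1) / (1 - w * z) ^ (ℓ+1) - (-ζ₀) ^ (ℓ+1))‖ ^ 2)) := by
      apply Tendsto.pow
      apply Tendsto.norm
      apply Tendsto.mul tendsto_const_nhds
      exact Tendsto.sub
        (tendsto_const_nhds.div (hT2.pow (ℓ+1)) (pow_ne_zero _ hwz)) tendsto_const_nhds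
    simpa [hq0] using hfin
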